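/- Eckart–Young theorem (Frobenius norm): Let A ∈ ℝ^{m×n} have SVD A = Σ_{i=1}^{min(m,n)} σ_i u_i v_iᵀ with σ_1 ≥ σ_2 ≥ ... ≥ 0. For k < rank(A), the matrix A_k = Σ_{i=1}^k σ_i u_i v_iᵀ satisfies ‖A - A_k‖_F² = Σ_{i>k} σ_i² ≤ ‖A - E‖_F² for every E ∈ ℝ^{m×n} with rank(E) ≤ k. -/

import Mathlib

open Matrix

lemma frob_expand {N nn mm : ℕ} (v : Fin N → Fin nn → ℝ)
    (hv : ∀ i j, ∑ l, v i l * v j l = if i = j then 1 else 0)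
    (w : Fin N → Fin mm → ℝ) :
    ∑ x, ∑ y, (∑ i, w i x * v i y)^2 = ∑ i, ∑ x, (w i x)^2 := by
  have key : ∀ x : Fin mm, ∑ y, (∑ i, w i x * v i y)^2
      = ∑ i : Fin N, ∑ j : Fin N, w i x * w j x * (if i = j then (1:ℝ) else 0) := by
    intro x
    calc ∑ y, (∑ i, w i x * v i y)^2
        = ∑ y, ∑ i, ∑ j, (w i x * v i y) * (w j x * v j y) := by
          refine Finset.sum_congr rfl fun y _ => ?_
          rw [sq, Finset.sum_mul_sum]
      _ = ∑ i, ∑ j, ∑ y, (w i x * v i y) * (w j x * v j y) := by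
          rw [Finset.sum_comm]
          exact Finset.sum_congr rfl fun i _ => Finset.sum_comm
      _ = ∑ i, ∑ j, w i x * w j x * ∑ y, v i y * v j y := by
          refine Finset.sum_congr rfl fun i _ => Finset.sum_congr rfl fun j _ => ?_
          rw [Finset.mul_sum]
          exact Finset.sum_congr rfl fun y _ => by ring
      _ = _ := by
          refine Finset.sum_congr rfl fun i _ => Finset.sum_congr rfl fun j _ => by rw [hv]
  calc ∑ x, ∑ y, (∑ i, w i x * v i y)^2 = ∑ x, ∑ i, w i x * w i x := by
        refine Finset.sum_congr rfl fun x _ => ?_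
        rw [key x]
        refine Finset.sum_congr rfl fun i _ => ?_
        simp [mul_ite]
    _ = ∑ i, ∑ x, (w i x)^2 := by rw [Finset.sum_comm]; simp [sq]

lemma bessel {N mm : ℕ} (u : Fin N → Fin mm → ℝ)
    (hu : ∀ i j, ∑ x, u i x * u j x = if i = j then 1 else 0)
    (w : Fin mm → ℝ) :
    ∑ i, (∑ x, w x * u i x)^2 ≤ ∑ x, (w x)^2 := by
  set c : Fin N → ℝ := fun i => ∑ x, w x * u i x with hc
  have h3 : ∑ x, (∑ i, c i * u i x)^2 = ∑ i, c i ^ 2 := by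
    have := frob_expand u hu (fun i (_ : Fin 1) => c i)
    simpa using this
  have h2 : ∑ x, w x * (∑ i, c i * u i x) = ∑ i, c i ^ 2 := by
    calc ∑ x, w x * (∑ i, c i * u i x) = ∑ x, ∑ i, c i * (w x * u i x) := by
          refine Finset.sum_congr rfl fun x _ => ?_
          rw [Finset.mul_sum]
          exact Finset.sum_congr rfl fun i _ => by ring
      _ = ∑ i, c i * ∑ x, w x * u i x := by
          rw [Finset.sum_comm]
          exact Finset.sum_congr rfl fun i _ => (Finset.mul_sum _ _ _).symm
      _ = ∑ i, c i ^ 2 := Finset.sum_congr rfl fun i _ => by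
          rw [show (∑ x, w x * u i x) = c i from rfl]; ring
  have h0 : (0:ℝ) ≤ ∑ x, (w x - ∑ i, c i * u i x)^2 :=
    Finset.sum_nonneg fun x _ => sq_nonneg _
  have hexp : ∑ x, (w x - ∑ i, c i * u i x)^2 = ∑ x, (w x)^2 - ∑ i, c i ^ 2 := by
    have e1 : ∀ x : Fin mm, (w x - ∑ i, c i * u i x)^2
        = (w x)^2 - 2 * (w x * (∑ i, c i * u i x)) + (∑ i, c i * u i x)^2 := fun x => by ring
    rw [Finset.sum_congr rfl fun x _ => e1 x]
    rw [Finset.sum_add_distrib, Finset.sum_sub_distrib, h3, ← Finset.mul_sum, h2]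
    ring
  have := hexp ▸ h0
  linarith

lemma exists_onb_decomp (m n : ℕ) (E : Matrix (Fin m) (Fin n) ℝ) :
    ∃ q : Fin E.rank → Fin m → ℝ, ∃ c : Fin E.rank → Fin n → ℝ,
      (∀ i j, ∑ x, q i x * q j x = if i = j then 1 else 0) ∧
      ∀ x y, E x y = ∑ j, q j x * c j y := by
  set e : (Fin m → ℝ) ≃ₗ[ℝ] EuclideanSpace ℝ (Fin m) :=
    (WithLp.linearEquiv 2 ℝ (Fin m → ℝ)).symm with he
  set V : Submodule ℝ (EuclideanSpace ℝ (Fin m)) :=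
    (LinearMap.range E.mulVecLin).map e.toLinearMap with hV
  have hr : Module.finrank ℝ V = E.rank := by
    have := LinearEquiv.finrank_map_eq e (LinearMap.range E.mulVecLin)
    exact this.trans rfl
  have b : OrthonormalBasis (Fin E.rank) ℝ V :=
    (stdOrthonormalBasis ℝ V).reindex (finCongr hr)
  have hcol : ∀ y : Fin n, e (fun x => E x y) ∈ V := by
    intro y
    refine Submodule.mem_map_of_mem ?_
    exact ⟨Pi.single y 1, by rw [Matrix.mulVecLin_apply, Matrix.mulVec_single]; ext x; simp⟩
  refine ⟨fun j x => (b j : EuclideanSpace ℝ (Fin m)) x,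
    fun j y => b.repr ⟨e (fun x => E x y), hcol y⟩ j, ?_, ?_⟩
  · intro i j
    have := b.orthonormal
    rw [orthonormal_iff_ite] at this
    have h2 := this i j
    rw [← h2]
    rw [Submodule.coe_inner, PiLp.inner_apply]
    simp [RCLike.inner_apply, mul_comm]
  · intro x y
    have h := b.sum_repr ⟨e (fun x => E x y), hcol y⟩
    have h2 := congrArg (fun z : V => ((z : EuclideanSpace ℝ (Fin m)) : Fin m → ℝ) x) h.symm
    simp only at h2
    show e (fun x => E x y) x = _
    rw [h2, Submodule.coe_sum]
    have h4 : ∀ (N : ℕ) (w : Fin N → EuclideanSpace ℝ (Fin m)) (r : Fin N → ℝ) (x : Fin m),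
        (∑ i, r i • w i) x = ∑ i, r i * w i x := by
      intro N w r x
      induction (Finset.univ : Finset (Fin N)) using Finset.induction with
      | empty => simp
      | @insert a s h ih => rw [Finset.sum_insert h, Finset.sum_insert h, ← ih]; rfl
    simp only [Submodule.coe_smul]
    rw [h4]
    simp [mul_comm]

lemma card_filter_lt_fin (M k : ℕ) (h : k ≤ M) :
    (Finset.univ.filter fun i : Fin M => (i:ℕ) < k).card = k := by
  have : (Finset.univ.filter fun i : Fin M => (i:ℕ) < k)
      = Finset.map (Fin.castLEEmb h) Finset.univ := by
    ext i
    simp only [Finset.mem_filter, Finset.mem_univ, true_and, Finset.mem_map,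
      Fin.castLEEmb_apply]
    constructor
    · intro hi; exact ⟨⟨i, hi⟩, rfl⟩
    · rintro ⟨j, rfl⟩; exact j.isLt
  rw [this, Finset.card_map, Finset.card_univ, Fintype.card_fin]

lemma tail_ineq {M : ℕ} (σ : Fin M → ℝ) (t : Fin M → ℝ) (k : ℕ) (hkM : k < M)
    (hσpos : ∀ i, 0 ≤ σ i) (hσmono : ∀ i j : Fin M, i ≤ j → σ j ≤ σ i)
    (ht0 : ∀ i, 0 ≤ t i) (ht1 : ∀ i, t i ≤ 1) (hts : ∑ i, t i ≤ (k:ℝ)) :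
    ∑ i ∈ Finset.univ.filter (fun i : Fin M => k ≤ (i:ℕ)), σ i ^ 2
      ≤ ∑ i, σ i ^ 2 * (1 - t i) := by
  set κ : Fin M := ⟨k, hkM⟩ with hκ
  set c0 : ℝ := σ κ ^ 2 with hc0def
  have hc0 : 0 ≤ c0 := sq_nonneg _
  have hlow : ∀ i : Fin M, (i:ℕ) < k → c0 ≤ σ i ^ 2 := by
    intro i hi
    have hle : σ κ ≤ σ i := hσmono i κ (by simp [hκ, Fin.le_def]; omega)
    exact pow_le_pow_left₀ (hσpos κ) hle 2
  have hhigh : ∀ i : Fin M, k ≤ (i:ℕ) → σ i ^ 2 ≤ c0 := by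
    intro i hi
    have hle : σ i ≤ σ κ := hσmono κ i (by simp [hκ, Fin.le_def]; omega)
    exact pow_le_pow_left₀ (hσpos i) hle 2
  set T := Finset.univ.filter (fun i : Fin M => (i:ℕ) < k) with hT
  set S := Finset.univ.filter (fun i : Fin M => k ≤ (i:ℕ)) with hS
  have hST : ∀ f : Fin M → ℝ, ∑ i, f i = ∑ i ∈ T, f i + ∑ i ∈ S, f i := by
    intro f
    rw [hT, hS]
    rw [← Finset.sum_filter_add_sum_filter_not Finset.univ (fun i : Fin M => (i:ℕ) < k) f]
    congr 1
    apply Finset.sum_congr _ (fun _ _ => rfl)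
    apply Finset.filter_congr
    intro i _
    simp [not_lt]
  have hcardT : T.card = k := card_filter_lt_fin M k hkM.le
  have h1 : ∑ i ∈ S, σ i ^ 2 * t i ≤ c0 * ∑ i ∈ S, t i := by
    rw [Finset.mul_sum]
    refine Finset.sum_le_sum fun i hi => ?_
    have hik : k ≤ (i:ℕ) := (Finset.mem_filter.mp hi).2
    exact mul_le_mul_of_nonneg_right (hhigh i hik) (ht0 i)
  have h2 : ∑ i ∈ S, t i ≤ (k:ℝ) - ∑ i ∈ T, t i := by
    have := hST t
    linarith [hts, this.symm.le]
  have h3 : c0 * ((k:ℝ) - ∑ i ∈ T, t i) = c0 * ∑ i ∈ T, (1 - t i) := by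
    rw [Finset.sum_sub_distrib, Finset.sum_const, hcardT]
    simp
  have h4 : c0 * ∑ i ∈ T, (1 - t i) ≤ ∑ i ∈ T, σ i ^ 2 * (1 - t i) := by
    rw [Finset.mul_sum]
    refine Finset.sum_le_sum fun i hi => ?_
    have hik : (i:ℕ) < k := (Finset.mem_filter.mp hi).2
    exact mul_le_mul_of_nonneg_right (hlow i hik) (by linarith [ht1 i])
  have h5 : ∑ i ∈ S, σ i ^ 2 * (1 - t i) = ∑ i ∈ S, σ i ^ 2 - ∑ i ∈ S, σ i ^ 2 * t i := by
    rw [← Finset.sum_sub_distrib]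
    exact Finset.sum_congr rfl fun i _ => by ring
  have hsplit := hST (fun i => σ i ^ 2 * (1 - t i))
  have h6 := mul_le_mul_of_nonneg_left h2 hc0
  linarith

theorem stmt_11 (m n : ℕ) (A : Matrix (Fin m) (Fin n) ℝ)
    (σ : Fin (min m n) → ℝ) (u : Fin (min m n) → Fin m → ℝ)
    (v : Fin (min m n) → Fin n → ℝ)
    (hσpos : ∀ i, 0 ≤ σ i) (hσmono : ∀ i j : Fin (min m n), i ≤ j → σ j ≤ σ i)
    (hu : ∀ i j, ∑ l, u i l * u j l = if i = j then 1 else 0)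
    (hv : ∀ i j, ∑ l, v i l * v j l = if i = j then 1 else 0)
    (hA : A = ∑ i, σ i • vecMulVec (u i) (v i))
    (frob2 : Matrix (Fin m) (Fin n) ℝ → ℝ)
    (hfrob2 : ∀ M, frob2 M = ∑ i, ∑ j, (M i j) ^ 2)
    (k : ℕ) (hk : k < A.rank)
    (Ak : Matrix (Fin m) (Fin n) ℝ)
    (hAk : Ak = ∑ i : Fin (min m n) with i.val < k, σ i • vecMulVec (u i) (v i)) :
    frob2 (A - Ak) = (∑ i : Fin (min m n) with k ≤ i.val, σ i ^ 2) ∧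
    ∀ E : Matrix (Fin m) (Fin n) ℝ, E.rank ≤ k → frob2 (A - Ak) ≤ frob2 (A - E) := by
  have hkm : A.rank ≤ m := by simpa using A.rank_le_card_height
  have hkn : A.rank ≤ n := by simpa using A.rank_le_card_width
  have hkmn : k < min m n := lt_of_lt_of_le hk (le_min hkm hkn)
  have huu : ∀ i, ∑ x, u i x ^ 2 = 1 := fun i => by
    have := hu i i; simpa [sq] using this
  have hAxy : ∀ x y, A x y = ∑ i, σ i * u i x * v i y := by
    intro x y
    rw [hA, Matrix.sum_apply]
    exact Finset.sum_congr rfl fun i _ => by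
      simp [Matrix.smul_apply, Matrix.vecMulVec_apply, smul_eq_mul, mul_assoc]
  have hAkxy : ∀ x y, Ak x y = ∑ i : Fin (min m n), (if i.val < k then σ i * u i x * v i y else 0) := by
    intro x y
    rw [hAk, Matrix.sum_apply, Finset.sum_filter]
    refine Finset.sum_congr rfl fun i _ => ?_
    split_ifs <;> simp [Matrix.smul_apply, Matrix.vecMulVec_apply, smul_eq_mul, mul_assoc]
  obtain ⟨w1, hw1⟩ : ∃ w1 : Fin (min m n) → Fin m → ℝ,
      ∀ i x, w1 i x = (if k ≤ (i:ℕ) then σ i else 0) * u i x := ⟨_, fun _ _ => rfl⟩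
  have hsub : ∀ x y, (A - Ak) x y = ∑ i, w1 i x * v i y := by
    intro x y
    rw [Matrix.sub_apply, hAxy, hAkxy, ← Finset.sum_sub_distrib]
    refine Finset.sum_congr rfl fun i _ => ?_
    rw [hw1]
    by_cases h : (i:ℕ) < k
    · simp [h, not_le.mpr h]
    · simp [h, not_lt.mp h, mul_assoc]
  have part1 : frob2 (A - Ak) = ∑ i ∈ Finset.univ.filter (fun i : Fin (min m n) => k ≤ i.val), σ i ^ 2 := by
    rw [hfrob2]
    simp only [hsub]
    rw [frob_expand v hv w1]
    refine Eq.trans (Finset.sum_congr rfl fun i _ => ?_) (Finset.sum_filter _ _).symm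
    by_cases h : k ≤ (i:ℕ)
    · simp only [hw1, h, if_true, mul_pow]
      rw [← Finset.mul_sum, huu i]
      ring
    · simp [hw1, h]
  refine ⟨part1, ?_⟩
  intro E hE
  obtain ⟨q, c, hq, hEdec⟩ := exists_onb_decomp m n E
  have hqq : ∀ j, ∑ x, q j x ^ 2 = 1 := fun j => by simpa [sq] using hq j j
  obtain ⟨d, hd⟩ : ∃ d : Fin E.rank → Fin (min m n) → ℝ,
      ∀ j i, d j i = ∑ x, q j x * u i x := ⟨_, fun _ _ => rfl⟩
  obtain ⟨t, ht⟩ : ∃ t : Fin (min m n) → ℝ,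
      ∀ i, t i = ∑ j, (d j i) ^ 2 := ⟨_, fun _ => rfl⟩
  have ht0 : ∀ i, 0 ≤ t i := fun i => (ht i) ▸ Finset.sum_nonneg fun j _ => sq_nonneg _
  have ht1 : ∀ i, t i ≤ 1 := by
    intro i
    have hb := bessel q hq (u i)
    calc t i = ∑ j, (∑ x, u i x * q j x) ^ 2 := by
          rw [ht i]
          refine Finset.sum_congr rfl fun j _ => ?_
          rw [hd]
          congr 1
          exact Finset.sum_congr rfl fun x _ => mul_comm _ _
      _ ≤ ∑ x, u i x ^ 2 := hb
      _ = 1 := huu i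
  have htsum : ∑ i, t i ≤ (k:ℝ) := by
    have hone : ∀ j, ∑ i, (d j i) ^ 2 ≤ 1 := by
      intro j
      have hb := bessel u hu (q j)
      calc ∑ i, d j i ^ 2 = ∑ i, (∑ x, q j x * u i x) ^ 2 := by
            refine Finset.sum_congr rfl fun i _ => ?_; rw [hd]
        _ ≤ ∑ x, q j x ^ 2 := hb
        _ = 1 := hqq j
    calc ∑ i, t i = ∑ j, ∑ i, (d j i)^2 := by
          rw [Finset.sum_congr rfl fun i _ => ht i]; exact Finset.sum_comm
      _ ≤ ∑ _j : Fin E.rank, (1:ℝ) := Finset.sum_le_sum fun j _ => hone j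
      _ = (E.rank : ℝ) := by simp
      _ ≤ (k:ℝ) := by exact_mod_cast hE
  obtain ⟨α, hα_def⟩ : ∃ α : Fin E.rank → Fin n → ℝ,
      ∀ j y, α j y = ∑ x, q j x * A x y := ⟨_, fun _ _ => rfl⟩
  obtain ⟨g, hg_def⟩ : ∃ g : Fin E.rank → Fin n → ℝ,
      ∀ j y, g j y = α j y - c j y := ⟨_, fun _ _ => rfl⟩
  obtain ⟨B, hB_def⟩ : ∃ B : Fin m → Fin n → ℝ,
      ∀ x y, B x y = A x y - ∑ j, q j x * α j y := ⟨_, fun _ _ => rfl⟩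
  obtain ⟨G, hG_def⟩ : ∃ G : Fin m → Fin n → ℝ,
      ∀ x y, G x y = ∑ j, q j x * g j y := ⟨_, fun _ _ => rfl⟩
  have hsplitxy : ∀ x y, A x y - E x y = B x y + G x y := by
    intro x y
    calc A x y - E x y = A x y - ∑ j, q j x * c j y := by rw [hEdec x y]
      _ = (A x y - ∑ j, q j x * α j y) + (∑ j, q j x * α j y - ∑ j, q j x * c j y) := by ring
      _ = B x y + G x y := by
          rw [hB_def, hG_def, ← Finset.sum_sub_distrib]
          congr 1
          exact Finset.sum_congr rfl fun j _ => by rw [hg_def]; ring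
  have horth : ∀ j y, ∑ x, q j x * B x y = 0 := by
    intro j y
    have e1 : ∀ x, q j x * B x y = q j x * A x y - ∑ j', q j' x * α j' y * q j x := by
      intro x
      rw [hB_def, mul_sub]
      congr 1
      rw [Finset.mul_sum]
      exact Finset.sum_congr rfl fun j' _ => by ring
    rw [Finset.sum_congr rfl fun x _ => e1 x, Finset.sum_sub_distrib]
    have e2 : ∑ x, ∑ j', q j' x * α j' y * q j x = ∑ j', α j' y * ∑ x, q j x * q j' x := by
      rw [Finset.sum_comm]
      refine Finset.sum_congr rfl fun j' _ => ?_
      rw [Finset.mul_sum]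
      exact Finset.sum_congr rfl fun x _ => by ring
    rw [e2]
    have e3 : ∑ j', α j' y * ∑ x, q j x * q j' x = α j y := by
      rw [Finset.sum_congr rfl fun j' _ => by rw [hq j j']]
      simp
    rw [e3, ← hα_def j y, sub_self]
  have hcross : ∑ x, ∑ y, B x y * G x y = 0 := by
    have e1 : ∀ x y, B x y * G x y = ∑ j, (q j x * B x y) * g j y := by
      intro x y
      rw [hG_def, Finset.mul_sum]
      exact Finset.sum_congr rfl fun j _ => by ring
    calc ∑ x, ∑ y, B x y * G x y = ∑ x, ∑ y, ∑ j, (q j x * B x y) * g j y :=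
          Finset.sum_congr rfl fun x _ => Finset.sum_congr rfl fun y _ => e1 x y
      _ = ∑ x, ∑ j, ∑ y, (q j x * B x y) * g j y :=
          Finset.sum_congr rfl fun x _ => Finset.sum_comm
      _ = ∑ j, ∑ x, ∑ y, (q j x * B x y) * g j y := Finset.sum_comm
      _ = ∑ j, ∑ y, ∑ x, (q j x * B x y) * g j y :=
          Finset.sum_congr rfl fun j _ => Finset.sum_comm
      _ = ∑ j, ∑ y, (∑ x, q j x * B x y) * g j y :=
          Finset.sum_congr rfl fun j _ => Finset.sum_congr rfl fun y _ =>
            (Finset.sum_mul _ _ _).symm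
      _ = 0 := by
          refine Finset.sum_eq_zero fun j _ => Finset.sum_eq_zero fun y _ => ?_
          rw [horth j y, zero_mul]
  have hα : ∀ j y, α j y = ∑ i, σ i * d j i * v i y := by
    intro j y
    rw [hα_def]
    calc ∑ x, q j x * A x y = ∑ x, ∑ i, σ i * (q j x * u i x) * v i y := by
          refine Finset.sum_congr rfl fun x _ => ?_
          rw [hAxy x y, Finset.mul_sum]
          exact Finset.sum_congr rfl fun i _ => by ring
      _ = ∑ i, ∑ x, σ i * (q j x * u i x) * v i y := Finset.sum_comm
      _ = ∑ i, σ i * d j i * v i y := by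
          refine Finset.sum_congr rfl fun i _ => ?_
          have : ∑ x, σ i * (q j x * u i x) * v i y = (∑ x, q j x * u i x) * (σ i * v i y) := by
            rw [Finset.sum_mul]
            exact Finset.sum_congr rfl fun x _ => by ring
          rw [this, ← hd]
          ring
  have hBval : ∀ x y, B x y = ∑ i, (σ i * (u i x - ∑ j, d j i * q j x)) * v i y := by
    intro x y
    have e1 : ∑ j, q j x * α j y = ∑ i, (σ i * ∑ j, d j i * q j x) * v i y := by
      calc ∑ j, q j x * α j y = ∑ j, ∑ i, σ i * d j i * (q j x * v i y) := by
            refine Finset.sum_congr rfl fun j _ => ?_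
            rw [hα j y, Finset.mul_sum]
            exact Finset.sum_congr rfl fun i _ => by ring
        _ = ∑ i, ∑ j, σ i * d j i * (q j x * v i y) := Finset.sum_comm
        _ = ∑ i, (σ i * ∑ j, d j i * q j x) * v i y := by
            refine Finset.sum_congr rfl fun i _ => ?_
            rw [Finset.mul_sum, Finset.sum_mul]
            exact Finset.sum_congr rfl fun j _ => by ring
    rw [hB_def, hAxy x y, e1, ← Finset.sum_sub_distrib]
    exact Finset.sum_congr rfl fun i _ => by ring
  have hB2 : ∑ x, ∑ y, (B x y) ^ 2 = ∑ i, σ i ^ 2 * (1 - t i) := by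
    calc ∑ x, ∑ y, (B x y) ^ 2
        = ∑ x, ∑ y, (∑ i, (σ i * (u i x - ∑ j, d j i * q j x)) * v i y) ^ 2 :=
          Finset.sum_congr rfl fun x _ => Finset.sum_congr rfl fun y _ => by rw [hBval x y]
      _ = ∑ i, ∑ x, (σ i * (u i x - ∑ j, d j i * q j x)) ^ 2 :=
          frob_expand v hv (fun i x => σ i * (u i x - ∑ j, d j i * q j x))
      _ = ∑ i, σ i ^ 2 * (1 - t i) := by
          refine Finset.sum_congr rfl fun i _ => ?_
          have e2 : ∑ x, u i x * (∑ j, d j i * q j x) = t i := by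
            calc ∑ x, u i x * (∑ j, d j i * q j x) = ∑ x, ∑ j, d j i * (q j x * u i x) := by
                  refine Finset.sum_congr rfl fun x _ => ?_
                  rw [Finset.mul_sum]
                  exact Finset.sum_congr rfl fun j _ => by ring
              _ = ∑ j, ∑ x, d j i * (q j x * u i x) := Finset.sum_comm
              _ = ∑ j, d j i ^ 2 := by
                  refine Finset.sum_congr rfl fun j _ => ?_
                  rw [← Finset.mul_sum, ← hd]
                  ring
              _ = t i := (ht i).symm
          have e3 : ∑ x, (∑ j, d j i * q j x) ^ 2 = t i := by
            have := frob_expand q hq (fun j (_ : Fin 1) => d j i)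
            rw [ht i]
            simpa using this
          have key : ∑ x, (u i x - ∑ j, d j i * q j x) ^ 2 = 1 - t i := by
            have e1 : ∀ x : Fin m, (u i x - ∑ j, d j i * q j x) ^ 2
                = u i x ^ 2 - 2 * (u i x * (∑ j, d j i * q j x)) + (∑ j, d j i * q j x) ^ 2 :=
              fun x => by ring
            rw [Finset.sum_congr rfl fun x _ => e1 x]
            rw [Finset.sum_add_distrib, Finset.sum_sub_distrib, huu i, ← Finset.mul_sum, e2, e3]
            ring
          simp only [mul_pow]
          rw [← Finset.mul_sum, key]
  have hexpand : frob2 (A - E) = ∑ x, ∑ y, (B x y + G x y) ^ 2 := by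
    rw [hfrob2]
    refine Finset.sum_congr rfl fun x _ => Finset.sum_congr rfl fun y _ => ?_
    rw [Matrix.sub_apply, hsplitxy x y]
  have hge : ∑ x, ∑ y, (B x y) ^ 2 ≤ ∑ x, ∑ y, (B x y + G x y) ^ 2 := by
    have e1 : ∀ x y, (B x y + G x y) ^ 2
        = B x y ^ 2 + 2 * (B x y * G x y) + G x y ^ 2 := fun x y => by ring
    have e2 : ∀ x, ∑ y, (B x y + G x y) ^ 2
        = ∑ y, B x y ^ 2 + 2 * (∑ y, B x y * G x y) + ∑ y, G x y ^ 2 := by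
      intro x
      rw [Finset.sum_congr rfl fun y _ => e1 x y, Finset.sum_add_distrib,
        Finset.sum_add_distrib, ← Finset.mul_sum]
    rw [Finset.sum_congr rfl fun x _ => e2 x, Finset.sum_add_distrib,
      Finset.sum_add_distrib, ← Finset.mul_sum, hcross]
    have hG2 : 0 ≤ ∑ x, ∑ y, G x y ^ 2 :=
      Finset.sum_nonneg fun x _ => Finset.sum_nonneg fun y _ => sq_nonneg _
    linarith
  have htail := tail_ineq σ t k hkmn hσpos hσmono ht0 ht1 htsum
  calc frob2 (A - Ak) = ∑ i ∈ Finset.univ.filter (fun i : Fin (min m n) => k ≤ i.val), σ i ^ 2 :=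
        part1
    _ ≤ ∑ i, σ i ^ 2 * (1 - t i) := htail
    _ = ∑ x, ∑ y, (B x y) ^ 2 := hB2.symm
    _ ≤ ∑ x, ∑ y, (B x y + G x y) ^ 2 := hge
    _ = frob2 (A - E) := hexpand.symm
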